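/- For every n ≥ 1 and every integer t ≥ 0, the number of vectors λ ∈ ℤ^n satisfying 0 ≤ λ_1 and i·λ_{i+1} ≥ (i+1)·λ_i for all 1 ≤ i ≤ n−1, together with λ_n ≤ n·t, equals (t+1)^n. (That is, the Ehrhart polynomial of the lecture hall polytope P_n = {λ ∈ L_n : λ_n ≤ n} is i(P_n, t) = (t+1)^n.) -/

import Mathlib

/-- A lecture hall partition of length `n`: a vector `λ ∈ ℤⁿ` (indexed `0,…,n-1`,
corresponding to `λ_1,…,λ_n`) with `0 ≤ λ_1` and `i·λ_{i+1} ≥ (i+1)·λ_i` for `1 ≤ i ≤ n-1`. -/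
def IsLectureHall (n : ℕ) (l : Fin n → ℤ) : Prop :=
  (∀ h : 0 < n, 0 ≤ l ⟨0, h⟩) ∧
  ∀ i : ℕ, ∀ h : i + 1 < n,
    ((i : ℤ) + 1) * l ⟨i + 1, h⟩ ≥ ((i : ℤ) + 2) * l ⟨i, by omega⟩


lemma lh_nonneg {n : ℕ} {l : Fin n → ℤ} (H : IsLectureHall n l) :
    ∀ (i : ℕ) (h : i < n), 0 ≤ l ⟨i, h⟩ := by
  intro i
  induction i with
  | zero => intro h; exact H.1 h
  | succ i ih =>
    intro h
    have h1 := H.2 i h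
    have h2 := ih (by omega)
    have h3 : 0 ≤ ((i : ℤ) + 1) * l ⟨i + 1, h⟩ :=
      le_trans (mul_nonneg (by positivity) h2) h1
    have h4 : ((i : ℤ) + 1) * 0 ≤ ((i : ℤ) + 1) * l ⟨i + 1, h⟩ := by simpa using h3
    exact le_of_mul_le_mul_left h4 (by positivity)

lemma lh_step {n : ℕ} {l : Fin n → ℤ} (H : IsLectureHall n l) (i : ℕ) (h : i + 1 < n) :
    l ⟨i, by omega⟩ ≤ l ⟨i + 1, h⟩ := by
  have h1 := H.2 i h
  have h2 := lh_nonneg H i (by omega)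
  have h3 : ((i : ℤ) + 1) * l ⟨i, by omega⟩ ≤ ((i : ℤ) + 1) * l ⟨i + 1, h⟩ := by nlinarith
  exact le_of_mul_le_mul_left h3 (by positivity)

lemma lh_le {n : ℕ} {l : Fin n → ℤ} (H : IsLectureHall n l) :
    ∀ (k i : ℕ) (h : i + k < n), l ⟨i, by omega⟩ ≤ l ⟨i + k, h⟩ := by
  intro k
  induction k with
  | zero => intro i h; exact le_refl _
  | succ k ih =>
    intro i h
    exact le_trans (ih i (by omega)) (lh_step H (i + k) (by omega))

lemma lh_le_last {n : ℕ} {l : Fin n → ℤ} (H : IsLectureHall n l) (i : ℕ) (h : i < n) :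
    l ⟨i, h⟩ ≤ l ⟨n - 1, by omega⟩ := by
  have e : (⟨i + (n - 1 - i), by omega⟩ : Fin n) = ⟨n - 1, by omega⟩ := by
    ext; simp; omega
  rw [← e]
  exact lh_le H (n - 1 - i) i (by omega)

lemma finite_S (n m : ℕ) :
    Finite {l : Fin (n + 1) → ℤ // IsLectureHall (n + 1) l ∧ l ⟨n, Nat.lt_succ_self n⟩ ≤ (m : ℤ)} := by
  haveI : Finite (Set.Icc (0 : ℤ) (m : ℤ)) := (Set.finite_Icc _ _).to_subtype
  apply Finite.of_injective
    (f := fun x i => (⟨x.1 i, lh_nonneg x.2.1 i.1 i.2,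
      le_trans (lh_le_last x.2.1 i.1 i.2) x.2.2⟩ : Set.Icc (0 : ℤ) (m : ℤ)))
  intro a b hab
  apply Subtype.ext
  funext i
  have := congrFun hab i
  exact congrArg Subtype.val this

def gLH (n m : ℕ) : ℕ := (m / n + 1) ^ (n - m % n) * (m / n + 2) ^ (m % n)

lemma gLH_one (m : ℕ) : gLH 1 m = m + 1 := by
  simp [gLH, Nat.mod_one]

lemma gLH_zero (n : ℕ) : gLH (n + 2) 0 = 1 := by
  simp [gLH, Nat.mod_one]

lemma gLH_rec (n m : ℕ) :
    gLH (n + 2) (m + 1) = gLH (n + 2) m + gLH (n + 1) ((n + 1) * (m + 1) / (n + 2)) := by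
  obtain ⟨t, r, hr, hm⟩ : ∃ t r, r < n + 2 ∧ m = (n + 2) * t + r :=
    ⟨m / (n + 2), m % (n + 2), Nat.mod_lt _ (by omega), (Nat.div_add_mod m (n + 2)).symm⟩
  subst hm
  have hdivm : ((n + 2) * t + r) / (n + 2) = t := by
    rw [Nat.mul_add_div (by omega), Nat.div_eq_of_lt hr, add_zero]
  have hmodm : ((n + 2) * t + r) % (n + 2) = r := by
    rw [Nat.mul_add_mod, Nat.mod_eq_of_lt hr]
  by_cases hr1 : r < n + 1
  · -- write n = r + d
    obtain ⟨d, rfl⟩ : ∃ d, n = r + d := ⟨n - r, by omega⟩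
    have hdiv1 : ((r + d + 2) * t + r + 1) / (r + d + 2) = t := by
      rw [add_assoc, Nat.mul_add_div (by omega), Nat.div_eq_of_lt (by omega), add_zero]
    have hmod1 : ((r + d + 2) * t + r + 1) % (r + d + 2) = r + 1 := by
      rw [add_assoc, Nat.mul_add_mod, Nat.mod_eq_of_lt (by omega)]
    have hM : (r + d + 1) * ((r + d + 2) * t + r + 1)
        = (r + d + 2) * ((r + d + 1) * t + r) + (d + 1) := by ring
    have hMdiv : (r + d + 1) * ((r + d + 2) * t + r + 1) / (r + d + 2)
        = (r + d + 1) * t + r := by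
      rw [hM, Nat.mul_add_div (by omega), Nat.div_eq_of_lt (by omega), add_zero]
    have hMdiv2 : ((r + d + 1) * t + r) / (r + d + 1) = t := by
      rw [Nat.mul_add_div (by omega), Nat.div_eq_of_lt (by omega), add_zero]
    have hMmod2 : ((r + d + 1) * t + r) % (r + d + 1) = r := by
      rw [Nat.mul_add_mod, Nat.mod_eq_of_lt (by omega)]
    unfold gLH
    rw [hdiv1, hmod1, hdivm, hmodm, hMdiv, hMdiv2, hMmod2]
    have e1 : r + d + 2 - (r + 1) = d + 1 := by omega
    have e2 : r + d + 2 - r = d + 2 := by omega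
    have e3 : r + d + 1 - r = d + 1 := by omega
    rw [e1, e2, e3]
    ring
  · have : r = n + 1 := by omega
    subst this
    have h1 : (n + 2) * t + (n + 1) + 1 = (n + 2) * (t + 1) := by ring
    have hdiv1 : ((n + 2) * t + (n + 1) + 1) / (n + 2) = t + 1 := by
      rw [h1, Nat.mul_div_cancel_left _ (by omega)]
    have hmod1 : ((n + 2) * t + (n + 1) + 1) % (n + 2) = 0 := by
      rw [h1, Nat.mul_mod_right]
    have hM : (n + 1) * ((n + 2) * t + (n + 1) + 1) = (n + 2) * ((n + 1) * (t + 1)) := by ring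
    have hMdiv : (n + 1) * ((n + 2) * t + (n + 1) + 1) / (n + 2) = (n + 1) * (t + 1) := by
      rw [hM, Nat.mul_div_cancel_left _ (by omega)]
    have hMdiv2 : (n + 1) * (t + 1) / (n + 1) = t + 1 :=
      Nat.mul_div_cancel_left _ (by omega)
    have hMmod2 : (n + 1) * (t + 1) % (n + 1) = 0 := Nat.mul_mod_right _ _
    unfold gLH
    rw [hdiv1, hmod1, hdivm, hmodm, hMdiv, hMdiv2, hMmod2]
    have e1 : n + 2 - (n + 1) = 1 := by omega
    rw [e1, Nat.sub_zero, Nat.sub_zero]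
    ring

lemma cast_le_succ {a : ℤ} (m : ℕ) (h : a ≤ (m : ℤ)) : a ≤ ((m + 1 : ℕ) : ℤ) := by
  push_cast; omega

lemma cast_le_of_eq {a : ℤ} (m : ℕ) (h : a = (m : ℤ) + 1) : a ≤ ((m + 1 : ℕ) : ℤ) := by
  push_cast; omega

lemma eq_of_not_le {a : ℤ} (m : ℕ) (h1 : a ≤ ((m + 1 : ℕ) : ℤ)) (h2 : ¬ a ≤ (m : ℤ)) :
    a = (m : ℤ) + 1 := by
  push_cast at h1; omega

lemma base_bound (m : ℕ) (x : Fin 1 → ℤ) (h1 : IsLectureHall 1 x)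
    (h2 : x ⟨0, Nat.lt_succ_self 0⟩ ≤ (m : ℤ)) : (x ⟨0, one_pos⟩).toNat < m + 1 := by
  have := h1.1 one_pos
  omega

lemma base_mem (m j : ℕ) (hj : j < m + 1) :
    IsLectureHall 1 (fun _ : Fin 1 => (j : ℤ)) ∧
      (fun _ : Fin 1 => (j : ℤ)) ⟨0, Nat.lt_succ_self 0⟩ ≤ (m : ℤ) := by
  refine ⟨⟨fun _ => ?_, fun i h => ?_⟩, ?_⟩
  · dsimp only; positivity
  · omega
  · dsimp only; exact_mod_cast Nat.le_of_lt_succ hj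

lemma restrict_mem (n m : ℕ) (y : Fin (n + 2) → ℤ) (h1 : IsLectureHall (n + 2) y)
    (h2 : y ⟨n + 1, Nat.lt_succ_self (n + 1)⟩ = (m : ℤ) + 1) :
    IsLectureHall (n + 1) (fun i : Fin (n + 1) => y ⟨i.1, by omega⟩) ∧
      (fun i : Fin (n + 1) => y ⟨i.1, by omega⟩) ⟨n, Nat.lt_succ_self n⟩
        ≤ (((n + 1) * (m + 1) / (n + 2) : ℕ) : ℤ) := by
  refine ⟨⟨fun h => ?_, fun i h => ?_⟩, ?_⟩
  · dsimp only; exact h1.1 (by omega)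
  · dsimp only; exact h1.2 i (by omega)
  · dsimp only
    have hstep := h1.2 n (Nat.lt_succ_self (n + 1))
    rw [h2] at hstep
    have hy0 : (0 : ℤ) ≤ y ⟨n, by omega⟩ := lh_nonneg h1 n (by omega)
    have hz : ((y ⟨n, by omega⟩).toNat : ℤ) = y ⟨n, by omega⟩ := Int.toNat_of_nonneg hy0
    have hnat : (y ⟨n, by omega⟩).toNat * (n + 2) ≤ (n + 1) * (m + 1) := by
      have hc : ((y ⟨n, by omega⟩).toNat : ℤ) * ((n : ℤ) + 2) ≤ (((n + 1) * (m + 1) : ℕ) : ℤ) := by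
        rw [hz]; push_cast; nlinarith
      exact_mod_cast hc
    have hdiv := (Nat.le_div_iff_mul_le (show 0 < n + 2 by omega)).mpr hnat
    omega

lemma extend_mem (n m : ℕ) (x : Fin (n + 1) → ℤ) (h1 : IsLectureHall (n + 1) x)
    (h2 : x ⟨n, Nat.lt_succ_self n⟩ ≤ (((n + 1) * (m + 1) / (n + 2) : ℕ) : ℤ)) :
    IsLectureHall (n + 2)
        (fun j : Fin (n + 2) => if h : j.1 < n + 1 then x ⟨j.1, h⟩ else (m : ℤ) + 1) ∧
      (fun j : Fin (n + 2) => if h : j.1 < n + 1 then x ⟨j.1, h⟩ else (m : ℤ) + 1)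
        ⟨n + 1, Nat.lt_succ_self (n + 1)⟩ = (m : ℤ) + 1 := by
  refine ⟨⟨fun h => ?_, fun i h => ?_⟩, ?_⟩
  · dsimp only
    rw [dif_pos (show (0 : ℕ) < n + 1 by omega)]
    exact h1.1 (by omega)
  · dsimp only
    by_cases hi : i + 1 < n + 1
    · rw [dif_pos hi, dif_pos (show i < n + 1 by omega)]
      exact h1.2 i hi
    · have hieq : i = n := by omega
      subst hieq
      rw [dif_neg (by omega), dif_pos (show i < i + 1 by omega)]
      set q : ℕ := (i + 1) * (m + 1) / (i + 2) with hq
      have hMle : q * (i + 2) ≤ (i + 1) * (m + 1) := Nat.div_mul_le_self _ _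
      have hmul : ((i : ℤ) + 2) * x ⟨i, by omega⟩ ≤ ((i : ℤ) + 2) * (q : ℤ) :=
        mul_le_mul_of_nonneg_left h2 (by positivity)
      have hc : (q : ℤ) * ((i : ℤ) + 2) ≤ ((i : ℤ) + 1) * ((m : ℤ) + 1) := by
        exact_mod_cast hMle
      linarith
  · dsimp only
    rw [dif_neg (by omega)]

lemma card_S (n : ℕ) : ∀ m : ℕ,
    Nat.card {l : Fin (n + 1) → ℤ //
      IsLectureHall (n + 1) l ∧ l ⟨n, Nat.lt_succ_self n⟩ ≤ (m : ℤ)} = gLH (n + 1) m := by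
  induction n with
  | zero =>
    intro m
    have e : {l : Fin 1 → ℤ // IsLectureHall 1 l ∧ l ⟨0, Nat.lt_succ_self 0⟩ ≤ (m : ℤ)}
        ≃ Fin (m + 1) :=
      { toFun := fun x => ⟨(x.1 ⟨0, one_pos⟩).toNat, base_bound m x.1 x.2.1 x.2.2⟩
        invFun := fun j => ⟨fun _ => (j : ℤ), base_mem m j.1 j.2⟩
        left_inv := fun x => by
          apply Subtype.ext
          funext i
          rcases i with ⟨i, hi⟩
          have hieq : i = 0 := by omega
          subst hieq
          have h0 := x.2.1.1 one_pos
          dsimp only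
          rw [Int.toNat_of_nonneg h0]
        right_inv := fun j => by
          apply Fin.ext
          dsimp only
          rw [Int.toNat_natCast] }
    rw [Nat.card_eq_of_equiv_fin e, gLH_one]
  | succ n ih =>
    intro m
    induction m with
    | zero =>
      rw [gLH_zero, Nat.card_eq_one_iff_unique]
      constructor
      · constructor
        intro x y
        apply Subtype.ext
        funext i
        rcases i with ⟨i, hi⟩
        have hx1 := lh_nonneg x.2.1 i hi
        have hx2 := le_trans (lh_le_last x.2.1 i hi) x.2.2
        have hy1 := lh_nonneg y.2.1 i hi
        have hy2 := le_trans (lh_le_last y.2.1 i hi) y.2.2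
        push_cast at hx2 hy2
        omega
      · refine ⟨⟨fun _ => 0, ⟨fun _ => le_refl 0, fun i h => by simp⟩, by simp⟩⟩
    | succ m ihm =>
      set M := (n + 1) * (m + 1) / (n + 2) with hMdef
      have e1 : {l : Fin (n + 2) → ℤ // IsLectureHall (n + 2) l ∧
          l ⟨n + 1, Nat.lt_succ_self (n + 1)⟩ ≤ ((m + 1 : ℕ) : ℤ)} ≃
          {l : Fin (n + 2) → ℤ // IsLectureHall (n + 2) l ∧
            l ⟨n + 1, Nat.lt_succ_self (n + 1)⟩ ≤ (m : ℤ)} ⊕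
          {l : Fin (n + 2) → ℤ // IsLectureHall (n + 2) l ∧
            l ⟨n + 1, Nat.lt_succ_self (n + 1)⟩ = (m : ℤ) + 1} :=
        { toFun := fun x =>
            if h : x.1 ⟨n + 1, Nat.lt_succ_self (n + 1)⟩ ≤ (m : ℤ) then
              Sum.inl ⟨x.1, x.2.1, h⟩
            else
              Sum.inr ⟨x.1, x.2.1, eq_of_not_le m x.2.2 h⟩
          invFun := Sum.elim
            (fun y => ⟨y.1, y.2.1, cast_le_succ m y.2.2⟩)
            (fun y => ⟨y.1, y.2.1, cast_le_of_eq m y.2.2⟩)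
          left_inv := fun x => by
            dsimp only
            split <;> rfl
          right_inv := fun y => by
            rcases y with y | y
            · simp only [Sum.elim_inl]
              exact dif_pos y.2.2
            · simp only [Sum.elim_inr]
              have hy := y.2.2
              exact dif_neg (not_le.mpr (show (m : ℤ) < y.1 ⟨n + 1, Nat.lt_succ_self (n + 1)⟩ by
                rw [hy]; exact lt_add_one _)) }
      have e2 : {l : Fin (n + 2) → ℤ // IsLectureHall (n + 2) l ∧
          l ⟨n + 1, Nat.lt_succ_self (n + 1)⟩ = (m : ℤ) + 1} ≃
          {l : Fin (n + 1) → ℤ // IsLectureHall (n + 1) l ∧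
            l ⟨n, Nat.lt_succ_self n⟩ ≤ (M : ℤ)} :=
        { toFun := fun y => ⟨fun i : Fin (n + 1) => y.1 ⟨i.1, Nat.lt_succ_of_lt i.2⟩,
            restrict_mem n m y.1 y.2.1 y.2.2⟩
          invFun := fun x => ⟨fun j : Fin (n + 2) =>
              if h : j.1 < n + 1 then x.1 ⟨j.1, h⟩ else (m : ℤ) + 1,
            extend_mem n m x.1 x.2.1 x.2.2⟩
          left_inv := fun y => by
            apply Subtype.ext
            funext j
            rcases j with ⟨j, hj⟩
            dsimp only
            split
            · rfl
            · rename_i hnot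
              have hjeq : j = n + 1 :=
                Nat.le_antisymm (Nat.le_of_lt_succ hj) (Nat.not_lt.mp hnot)
              subst hjeq
              exact y.2.2.symm
          right_inv := fun x => by
            apply Subtype.ext
            funext i
            rcases i with ⟨i, hi⟩
            dsimp only
            rw [dif_pos hi] }
      haveI := finite_S (n + 1) m
      haveI := finite_S n M
      haveI : Finite {l : Fin (n + 2) → ℤ // IsLectureHall (n + 2) l ∧
          l ⟨n + 1, Nat.lt_succ_self (n + 1)⟩ = (m : ℤ) + 1} := Finite.of_equiv _ e2.symm
      rw [Nat.card_congr e1, Nat.card_sum, Nat.card_congr e2, ihm, ih M, gLH_rec]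

/-- The Ehrhart polynomial of the lecture hall polytope `P_n = {λ ∈ L_n : λ_n ≤ n}`
is `i(P_n, t) = (t+1)^n`. -/
theorem lectureHall_polytope_ehrhart (n t : ℕ) (hn : 1 ≤ n) :
    Nat.card {l : Fin n → ℤ //
      IsLectureHall n l ∧ l ⟨n - 1, by omega⟩ ≤ (n : ℤ) * t} = (t + 1) ^ n := by
  obtain ⟨k, rfl⟩ : ∃ k, n = k + 1 := ⟨n - 1, by omega⟩
  have hcast : ((k + 1 : ℕ) : ℤ) * (t : ℤ) = (((k + 1) * t : ℕ) : ℤ) := by push_cast; ring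
  rw [hcast]
  refine Eq.trans (card_S k ((k + 1) * t)) ?_
  unfold gLH
  rw [Nat.mul_div_cancel_left _ (by omega), Nat.mul_mod_right]
  simp
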